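/- For p ∈ (0,1), the Fisher information of the probability distribution {(1−p)² + p², 2p(1−p)} equals 4(1−2p)²/((1−p)² + p²) + 2(1−2p)²/(p(1−p)), and this quantity is at most 2/(p(1−p)). -/

import Mathlib

/-- For `p ∈ (0,1)`, the Fisher information of the probability distribution
`{(1−p)² + p², 2p(1−p)}` equals `4(1−2p)²/((1−p)²+p²) + 2(1−2p)²/(p(1−p))`,
and this is at most `2/(p(1−p))`. -/
theorem fisher_info_two_outcome_bitflip (p : ℝ) (hp0 : 0 < p) (hp1 : p < 1) :
    ((deriv (fun q : ℝ => (1 - q) ^ 2 + q ^ 2) p) ^ 2 / ((1 - p) ^ 2 + p ^ 2)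
        + (deriv (fun q : ℝ => 2 * q * (1 - q)) p) ^ 2 / (2 * p * (1 - p))
      = 4 * (1 - 2 * p) ^ 2 / ((1 - p) ^ 2 + p ^ 2)
        + 2 * (1 - 2 * p) ^ 2 / (p * (1 - p))) ∧
      4 * (1 - 2 * p) ^ 2 / ((1 - p) ^ 2 + p ^ 2) + 2 * (1 - 2 * p) ^ 2 / (p * (1 - p))
        ≤ 2 / (p * (1 - p)) := by
  have h1 : (0:ℝ) < 1 - p := by linarith
  have hq : (0:ℝ) < (1 - p) ^ 2 + p ^ 2 := by positivity
  have hd1 : deriv (fun q : ℝ => (1 - q) ^ 2 + q ^ 2) p = -(2 * (1 - p)) + 2 * p := by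
    have : HasDerivAt (fun q : ℝ => (1 - q) ^ 2 + q ^ 2) (-(2 * (1 - p)) + 2 * p) p := by
      have h := ((hasDerivAt_id p).const_sub 1).pow 2
      have h2 := ((hasDerivAt_id p).pow 2)
      simpa [Pi.add_def, Pi.pow_def] using h.add h2
    exact this.deriv
  have hd2 : deriv (fun q : ℝ => 2 * q * (1 - q)) p = 2 * (1 - p) + 2 * p * (-1) := by
    have : HasDerivAt (fun q : ℝ => 2 * q * (1 - q)) (2 * (1 - p) + 2 * p * (-1)) p := by
      simpa [Pi.mul_def] using ((hasDerivAt_id p).const_mul 2).mul ((hasDerivAt_id p).const_sub 1)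
    exact this.deriv
  constructor
  · rw [hd1, hd2]
    field_simp
    ring
  · rw [div_add_div _ _ (ne_of_gt hq) (by positivity), div_le_div_iff₀ (by positivity) (by positivity)]
    nlinarith [sq_nonneg (1 - 2*p), sq_nonneg p, mul_pos hp0 h1, sq_nonneg ((1-2*p)*p*(1-p))]
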